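/- Let m ≥ 1 be an integer and let c₀₁, c₀₂ ∈ Fin m be arbitrary baseline labels. Then the function α ↦ ∑_{(u,v,w,z) ∈ (Fin m)⁴, u ≠ v, w ≠ z} q_α(u, v, w, z; c₀₁, c₀₂) tends to (m-1)²/m² as α → ∞ (along Filter.atTop). In words: whatever the baseline labels, the probability that the two units fail to co-cluster in both views tends to (m-1)²/m² as α → ∞. -/

import Mathlib

/-- Indicator that the triple `(a, b, c)` has all three entries equal. -/
def isA {m : ℕ} (a b c : Fin m) : ℕ :=
  if a = b ∧ b = c then 1 else 0

/-- Indicator that the triple `(a, b, c)` has three pairwise distinct entries. -/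
def isB {m : ℕ} (a b c : Fin m) : ℕ :=
  if a ≠ b ∧ b ≠ c ∧ a ≠ c then 1 else 0

/-- Indicator that the triple `(a, b, c)` has exactly two equal entries. -/
def isC {m : ℕ} (a b c : Fin m) : ℕ :=
  if (a = b ∧ b ≠ c) ∨ (b ≠ c ∧ a = c) ∨ (a ≠ b ∧ b = c) then 1 else 0

/-- The conditional probability `q_α(c₁₁, c₁₂, c₂₁, c₂₂; c₀₁, c₀₂)` of the view
labels of two units in two views given their baseline labels (Proposition 1 of
the paper, `n = J = 2` case).  The triple of unit `i` is `(c₀ᵢ, c₁ᵢ, c₂ᵢ)`. -/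
noncomputable def q (m : ℕ) (α : ℝ) (c11 c12 c21 c22 c01 c02 : Fin m) : ℝ :=
  ((α + 2) * (α + 1)) ^ (isA c01 c11 c21 + isA c02 c12 c22) *
    (α ^ 2) ^ (isB c01 c11 c21 + isB c02 c12 c22) *
    ((α + 1) * α) ^ (isC c01 c11 c21 + isC c02 c12 c22) /
      ((α * m + 2) * (α * m + 1)) ^ 2

open Filter

/-- A linear-over-linear ratio `(α + x)/(α M + y)` tends to `1/M`. -/
lemma lin_tendsto (M x y : ℝ) (hM : 0 < M) :
    Tendsto (fun α : ℝ => (α + x) / (α * M + y)) atTop (nhds (1 / M)) := by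
  have h1 : Tendsto (fun α : ℝ => 1 + x * α⁻¹) atTop (nhds 1) := by
    have := tendsto_inv_atTop_zero (𝕜 := ℝ)
    have h := this.const_mul x
    simpa using (tendsto_const_nhds (x := (1:ℝ)) (f := atTop)).add h
  have h2 : Tendsto (fun α : ℝ => M + y * α⁻¹) atTop (nhds M) := by
    have := tendsto_inv_atTop_zero (𝕜 := ℝ)
    have h := this.const_mul y
    simpa using (tendsto_const_nhds (x := M) (f := atTop)).add h
  have hdiv := h1.div h2 (ne_of_gt hM)
  apply hdiv.congr'
  filter_upwards [eventually_gt_atTop (0:ℝ)] with α hα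
  have hα' : α ≠ 0 := ne_of_gt hα
  rw [Pi.div_apply]
  field_simp

/-- A quadratic-over-quadratic ratio tends to `1/M²`. -/
lemma quad_tendsto (M x y : ℝ) (hM : 0 < M) :
    Tendsto (fun α : ℝ => ((α + x) * (α + y)) / ((α * M + 2) * (α * M + 1)))
      atTop (nhds (1 / M ^ 2)) := by
  have h := (lin_tendsto M x 2 hM).mul (lin_tendsto M y 1 hM)
  have he : (1 / M) * (1 / M) = 1 / M ^ 2 := by ring
  rw [← he]
  apply h.congr
  intro α
  rw [div_mul_div_comm]

/-- The per-unit factor of `q`. -/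
noncomputable def runit (m : ℕ) (α : ℝ) (a b c : Fin m) : ℝ :=
  ((α + 2) * (α + 1)) ^ (isA a b c) * (α ^ 2) ^ (isB a b c) *
    ((α + 1) * α) ^ (isC a b c) / ((α * m + 2) * (α * m + 1))

/-- `q` factors as the product of the two per-unit factors. -/
lemma q_eq (m : ℕ) (α : ℝ) (c11 c12 c21 c22 c01 c02 : Fin m) :
    q m α c11 c12 c21 c22 c01 c02 = runit m α c01 c11 c21 * runit m α c02 c12 c22 := by
  simp only [q, runit, pow_add, div_eq_mul_inv, sq, mul_inv]
  ring

/-- Each per-unit factor tends to `1/m²`. -/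
lemma unit_tendsto (m : ℕ) (hm : 1 ≤ m) (a b c : Fin m) :
    Tendsto (fun α : ℝ => runit m α a b c) atTop (nhds (1 / (m : ℝ) ^ 2)) := by
  have hM : (0 : ℝ) < m := by exact_mod_cast hm
  unfold runit
  by_cases hab : a = b <;> by_cases hbc : b = c <;> by_cases hac : a = c
  · have h : isA a b c = 1 ∧ isB a b c = 0 ∧ isC a b c = 0 := by
      simp [isA, isB, isC, hab, hbc]
    rw [h.1, h.2.1, h.2.2]
    simp only [pow_zero, pow_one, one_mul, mul_one]
    exact quad_tendsto _ 2 1 hM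
  · exact absurd (hab.trans hbc) hac
  · exact absurd (hab.symm.trans hac) hbc
  · have h : isA a b c = 0 ∧ isB a b c = 0 ∧ isC a b c = 1 := by
      simp [isA, isB, isC, hab, hbc]
    rw [h.1, h.2.1, h.2.2]
    simp only [pow_zero, pow_one, one_mul, mul_one]
    exact (quad_tendsto (m : ℝ) 1 0 hM).congr (by intro α; ring_nf)
  · exact absurd (hac.trans hbc.symm) hab
  · have h : isA a b c = 0 ∧ isB a b c = 0 ∧ isC a b c = 1 := by
      simp [isA, isB, isC, hab, hbc, hac]
    rw [h.1, h.2.1, h.2.2]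
    simp only [pow_zero, pow_one, one_mul, mul_one]
    exact (quad_tendsto (m : ℝ) 1 0 hM).congr (by intro α; ring_nf)
  · have h : isA a b c = 0 ∧ isB a b c = 0 ∧ isC a b c = 1 := by
      simp [isA, isB, isC, hab, hbc, hac]
    rw [h.1, h.2.1, h.2.2]
    simp only [pow_zero, pow_one, one_mul, mul_one]
    exact (quad_tendsto (m : ℝ) 1 0 hM).congr (by intro α; ring_nf)
  · have h : isA a b c = 0 ∧ isB a b c = 1 ∧ isC a b c = 0 := by
      simp [isA, isB, isC, hab, hbc, hac]
    rw [h.1, h.2.1, h.2.2]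
    simp only [pow_zero, pow_one, one_mul, mul_one]
    exact (quad_tendsto (m : ℝ) 0 0 hM).congr (by intro α; ring_nf)

/-- Cardinality of the "no co-clustering in either view" index set. -/
lemma card_filter_ne (m : ℕ) :
    (Finset.univ.filter
      (fun p : Fin m × Fin m × Fin m × Fin m =>
        p.1 ≠ p.2.1 ∧ p.2.2.1 ≠ p.2.2.2)).card = (m * m - m) ^ 2 := by
  have h : (Finset.univ.filter
      (fun p : Fin m × Fin m × Fin m × Fin m =>
        p.1 ≠ p.2.1 ∧ p.2.2.1 ≠ p.2.2.2)).card
      = ((Finset.univ : Finset (Fin m)).offDiag ×ˢ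
          (Finset.univ : Finset (Fin m)).offDiag).card := by
    apply Finset.card_bij' (fun p _ => ((p.1, p.2.1), (p.2.2.1, p.2.2.2)))
      (fun q _ => (q.1.1, q.1.2, q.2.1, q.2.2)) <;>
      simp [Finset.mem_offDiag, and_assoc]
  rw [h, Finset.card_product, Finset.offDiag_card, Finset.card_univ, Fintype.card_fin, sq]

/-- Corollary 1: whatever the baseline labels, the probability of failing to
co-cluster in both views tends to `(m-1)²/m²` as `α → ∞`. -/
theorem no_cocluster_tendsto_alpha_infty (m : ℕ) (hm : 1 ≤ m)
    (c01 c02 : Fin m) :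
    Filter.Tendsto (fun α : ℝ =>
        ∑ p ∈ Finset.univ.filter
            (fun p : Fin m × Fin m × Fin m × Fin m =>
              p.1 ≠ p.2.1 ∧ p.2.2.1 ≠ p.2.2.2),
          q m α p.1 p.2.1 p.2.2.1 p.2.2.2 c01 c02)
      Filter.atTop (nhds (((m : ℝ) - 1) ^ 2 / (m : ℝ) ^ 2)) := by
  have hM : (0 : ℝ) < m := by exact_mod_cast hm
  set S := Finset.univ.filter
      (fun p : Fin m × Fin m × Fin m × Fin m =>
        p.1 ≠ p.2.1 ∧ p.2.2.1 ≠ p.2.2.2) with hS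
  have key : Tendsto (fun α : ℝ =>
      ∑ p ∈ S, q m α p.1 p.2.1 p.2.2.1 p.2.2.2 c01 c02) atTop
      (nhds (∑ _p ∈ S, (1 / (m : ℝ) ^ 2) * (1 / (m : ℝ) ^ 2))) := by
    apply tendsto_finset_sum
    intro p _
    simp only [q_eq]
    exact (unit_tendsto m hm c01 p.1 p.2.2.1).mul (unit_tendsto m hm c02 p.2.1 p.2.2.2)
  have hcard : (S.card : ℝ) = ((m : ℝ) * ((m : ℝ) - 1)) ^ 2 := by
    rw [hS, card_filter_ne]
    have hmm : m ≤ m * m := Nat.le_mul_of_pos_left m hm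
    push_cast [Nat.cast_sub hmm]
    ring
  have hval : (∑ _p ∈ S, (1 / (m : ℝ) ^ 2) * (1 / (m : ℝ) ^ 2))
      = ((m : ℝ) - 1) ^ 2 / (m : ℝ) ^ 2 := by
    rw [Finset.sum_const, nsmul_eq_mul, hcard]
    field_simp
  rw [← hval]
  exact key
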